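/- arXiv:1411.0479 — 2 statements merged into one kernel-verified Lean document; each statement's English description precedes it below -/
import Mathlib

section
/- For a strongly convex QP with modulus μ (i.e., H ⪰ μI, μ > 0), any dual feasible y ≥ 0 yields a primal point z(y) = −H^{-1}(D'y + h) satisfying ‖z(y) − z*‖² ≤ (2/μ)(Φ* − Φ(y)), where z* is the primal optimum; hence dual suboptimality controls primal accuracy. -/
open Matrix

/-- For a strongly convex QP with modulus `μ` (`H ⪰ μI`), any dual feasible
`y ≥ 0` yields the primal point `z(y) = -H⁻¹(D'y + h)` satisfying
`‖z(y) - z*‖² ≤ (2/μ)(Φ* - Φ(y))`, where `z*` is the primal optimum and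
`Φ* = V(z*)` by strong duality. -/
theorem dual_suboptimality_controls_primal_accuracy (n m : ℕ)
    (H : Matrix (Fin n) (Fin n) ℝ) (hHsym : H.IsHermitian)
    (μ : ℝ) (hμ : 0 < μ)
    (hHμ : ∀ v : Fin n → ℝ, μ * (v ⬝ᵥ v) ≤ v ⬝ᵥ H.mulVec v)
    (h : Fin n → ℝ) (D : Matrix (Fin m) (Fin n) ℝ) (d : Fin m → ℝ)
    (V : (Fin n → ℝ) → ℝ)
    (hV : ∀ z, V z = (1 / 2 : ℝ) * (z ⬝ᵥ H.mulVec z) + h ⬝ᵥ z)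
    (Φ : (Fin m → ℝ) → ℝ)
    (hΦ : ∀ y, Φ y = ⨅ z : Fin n → ℝ, V z + y ⬝ᵥ (D.mulVec z - d))
    (zstar : Fin n → ℝ) (hzstar_feas : D.mulVec zstar ≤ d)
    (hzstar_opt : ∀ z, D.mulVec z ≤ d → V zstar ≤ V z)
    (y : Fin m → ℝ) (hy : 0 ≤ y) :
    ((-(H⁻¹.mulVec (Dᵀ.mulVec y + h)) - zstar) ⬝ᵥ
        (-(H⁻¹.mulVec (Dᵀ.mulVec y + h)) - zstar)) ≤
      (2 / μ) * (V zstar - Φ y) := by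
  set c : Fin n → ℝ := Dᵀ.mulVec y + h with hc
  set zy : Fin n → ℝ := -(H⁻¹.mulVec c) with hzy
  -- H is positive definite, hence invertible
  have hPD : H.PosDef := by
    refine posDef_iff_dotProduct_mulVec.mpr ⟨hHsym, fun v hv => ?_⟩
    have h1 : 0 < v ⬝ᵥ v := by
      have hnn : 0 ≤ v ⬝ᵥ v := Finset.sum_nonneg fun i _ => mul_self_nonneg _
      have hne : v ⬝ᵥ v ≠ 0 := fun h0 => hv (dotProduct_self_eq_zero.mp h0)
      exact lt_of_le_of_ne hnn (Ne.symm hne)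
    calc (0:ℝ) < μ * (v ⬝ᵥ v) := by positivity
    _ ≤ v ⬝ᵥ H.mulVec v := hHμ v
  have hdet : IsUnit H.det := hPD.det_pos.ne'.isUnit
  have hHz : H.mulVec zy = -c := by
    rw [hzy, mulVec_neg, mulVec_mulVec, Matrix.mul_nonsing_inv H hdet, one_mulVec]
  have hT : Hᵀ = H := by simpa using hHsym.eq
  have hsymm : ∀ a b : Fin n → ℝ, a ⬝ᵥ H.mulVec b = b ⬝ᵥ H.mulVec a := by
    intro a b
    rw [dotProduct_mulVec, ← mulVec_transpose, hT, dotProduct_comm]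
  -- Lagrangian in terms of c
  have hL : ∀ z, V z + y ⬝ᵥ (D.mulVec z - d)
      = (1 / 2 : ℝ) * (z ⬝ᵥ H.mulVec z) + c ⬝ᵥ z - y ⬝ᵥ d := by
    intro z
    have hyD : y ⬝ᵥ D.mulVec z = Dᵀ.mulVec y ⬝ᵥ z := by
      rw [dotProduct_mulVec, ← mulVec_transpose]
    rw [hV, dotProduct_sub, hyD, hc, add_dotProduct]
    ring
  -- quadratic expansion
  have hkey : ∀ z, (1 / 2 : ℝ) * ((z - zy) ⬝ᵥ H.mulVec (z - zy))
      = ((1 / 2 : ℝ) * (z ⬝ᵥ H.mulVec z) + c ⬝ᵥ z)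
        - ((1 / 2 : ℝ) * (zy ⬝ᵥ H.mulVec zy) + c ⬝ᵥ zy) := by
    intro z
    have e1 : zy ⬝ᵥ H.mulVec z = z ⬝ᵥ H.mulVec zy := hsymm zy z
    have e2 : z ⬝ᵥ H.mulVec zy = -(c ⬝ᵥ z) := by
      rw [hHz, dotProduct_neg, dotProduct_comm]
    have e3 : zy ⬝ᵥ H.mulVec zy = -(c ⬝ᵥ zy) := by
      rw [hHz, dotProduct_neg, dotProduct_comm]
    rw [mulVec_sub, dotProduct_sub, sub_dotProduct, sub_dotProduct, e1, e2, e3]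
    ring
  have hquadnn : ∀ v : Fin n → ℝ, 0 ≤ v ⬝ᵥ H.mulVec v := by
    intro v
    have hnn : (0:ℝ) ≤ v ⬝ᵥ v := Finset.sum_nonneg fun i _ => mul_self_nonneg _
    nlinarith [hHμ v]
  -- Φ y equals the Lagrangian value at zy
  have hlb : ∀ z, (1 / 2 : ℝ) * (zy ⬝ᵥ H.mulVec zy) + c ⬝ᵥ zy - y ⬝ᵥ d
      ≤ V z + y ⬝ᵥ (D.mulVec z - d) := by
    intro z
    rw [hL z]
    have := hquadnn (z - zy)
    have := hkey z
    linarith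
  have hLzy : Φ y = (1 / 2 : ℝ) * (zy ⬝ᵥ H.mulVec zy) + c ⬝ᵥ zy - y ⬝ᵥ d := by
    rw [hΦ]
    apply le_antisymm
    · exact (ciInf_le ⟨_, Set.forall_mem_range.mpr hlb⟩ zy).trans_eq (hL zy)
    · exact le_ciInf hlb
  -- y ⬝ᵥ (D z* - d) ≤ 0
  have hslack : y ⬝ᵥ (D.mulVec zstar - d) ≤ 0 := by
    apply Finset.sum_nonpos
    intro i _
    exact mul_nonpos_of_nonneg_of_nonpos (hy i) (sub_nonpos.mpr (hzstar_feas i))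
  -- main chain
  have hgap : (1 / 2 : ℝ) * ((zstar - zy) ⬝ᵥ H.mulVec (zstar - zy)) ≤ V zstar - Φ y := by
    have := hL zstar
    have := hkey zstar
    linarith
  have hmu := hHμ (zstar - zy)
  have hdd : (zy - zstar) ⬝ᵥ (zy - zstar) = (zstar - zy) ⬝ᵥ (zstar - zy) := by
    have : zy - zstar = -(zstar - zy) := by ring
    rw [this, neg_dotProduct, dotProduct_neg, neg_neg]
  have hgoal : (zy - zstar) ⬝ᵥ (zy - zstar) ≤ (2 / μ) * (V zstar - Φ y) := by
    rw [hdd]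
    rw [div_mul_eq_mul_div, le_div_iff₀ hμ]
    nlinarith
  simpa [hzy, hc] using hgoal
end

section
/- If a vector z ∈ ℝⁿ is (ε_V, ε_g)-optimal for the QP min{V(z) : Dz ≤ d} with V strongly convex with modulus μ and optimal solution z*, then ‖z − z*‖ ≤ sqrt(2(ε_V + ‖y*‖₁ ε_g)/μ), where y* ≥ 0 is any dual optimal multiplier. -/
open Matrix

/-- If `z` is `(ε_V, ε_g)`-optimal for the QP `min {V(z) : Dz ≤ d}` with `V`
strongly convex with modulus `μ` and optimum `z*`, then
`‖z - z*‖ ≤ sqrt(2(ε_V + ‖y*‖₁ ε_g)/μ)` for any dual optimal multiplier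
`y* ≥ 0` (characterized by the saddle-point inequality). -/
theorem eps_optimal_distance_bound (n m : ℕ)
    (H : Matrix (Fin n) (Fin n) ℝ) (hHsym : H.IsHermitian)
    (μ : ℝ) (hμ : 0 < μ)
    (hHμ : ∀ v : Fin n → ℝ, μ * (v ⬝ᵥ v) ≤ v ⬝ᵥ H.mulVec v)
    (h : Fin n → ℝ) (D : Matrix (Fin m) (Fin n) ℝ) (d : Fin m → ℝ)
    (V : (Fin n → ℝ) → ℝ)
    (hV : ∀ z, V z = (1 / 2 : ℝ) * (z ⬝ᵥ H.mulVec z) + h ⬝ᵥ z)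
    (zstar : Fin n → ℝ) (hzstar_feas : D.mulVec zstar ≤ d)
    (hzstar_opt : ∀ w, D.mulVec w ≤ d → V zstar ≤ V w)
    (ystar : Fin m → ℝ) (hystar_nonneg : 0 ≤ ystar)
    (hsaddle : ∀ w : Fin n → ℝ, V zstar ≤ V w + ystar ⬝ᵥ (D.mulVec w - d))
    (εV εg : ℝ) (hεV : 0 ≤ εV) (hεg : 0 ≤ εg)
    (z : Fin n → ℝ)
    (hsubopt : V z - V zstar ≤ εV)
    (hinfeas : ∀ i, max ((D.mulVec z - d) i) 0 ≤ εg) :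
    Real.sqrt ((z - zstar) ⬝ᵥ (z - zstar)) ≤
      Real.sqrt (2 * (εV + (∑ i, |ystar i|) * εg) / μ) := by
  have hHt : Hᵀ = H := by simpa using hHsym.eq
  obtain ⟨s, hs⟩ : ∃ s, s = z - zstar := ⟨_, rfl⟩
  -- symmetry of the quadratic form
  have hsym : ∀ v w : Fin n → ℝ, v ⬝ᵥ H.mulVec w = H.mulVec v ⬝ᵥ w := by
    intro v w
    rw [Matrix.dotProduct_mulVec, ← Matrix.mulVec_transpose, hHt]
  -- complementary slackness
  have hc0 : ystar ⬝ᵥ (D.mulVec zstar - d) = 0 := by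
    have h1 : 0 ≤ ystar ⬝ᵥ (D.mulVec zstar - d) := by
      have := hsaddle zstar; linarith
    have h2 : ystar ⬝ᵥ (D.mulVec zstar - d) ≤ 0 := by
      apply Finset.sum_nonpos
      intro i _
      have hle : (D.mulVec zstar - d) i ≤ 0 := by
        simpa [sub_nonpos] using hzstar_feas i
      exact mul_nonpos_of_nonneg_of_nonpos (hystar_nonneg i) hle
    linarith
  have hc0' : ystar ⬝ᵥ D.mulVec zstar - ystar ⬝ᵥ d = 0 := by
    rw [← dotProduct_sub]; exact hc0
  obtain ⟨a, ha⟩ : ∃ a, a = H.mulVec zstar ⬝ᵥ s + h ⬝ᵥ s + ystar ⬝ᵥ D.mulVec s := ⟨_, rfl⟩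
  obtain ⟨b, hb⟩ : ∃ b, b = s ⬝ᵥ H.mulVec s := ⟨_, rfl⟩
  have hbμ : μ * (s ⬝ᵥ s) ≤ b := hb ▸ hHμ s
  have hss : 0 ≤ s ⬝ᵥ s := Finset.sum_nonneg fun i _ => mul_self_nonneg _
  have hb0 : 0 ≤ b := le_trans (mul_nonneg hμ.le hss) hbμ
  -- expansion of the Lagrangian along the segment
  have expand : ∀ t : ℝ,
      V (zstar + t • s) + ystar ⬝ᵥ (D.mulVec (zstar + t • s) - d)
        = V zstar + t * a + t ^ 2 / 2 * b := by
    intro t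
    rw [hV, hV, Matrix.mulVec_add, Matrix.mulVec_smul, Matrix.mulVec_add, Matrix.mulVec_smul]
    simp only [dotProduct_add, add_dotProduct, dotProduct_smul,
      smul_dotProduct, dotProduct_sub, smul_eq_mul]
    rw [hsym zstar s, dotProduct_comm s (H.mulVec zstar), ha, hb]
    linear_combination hc0'
  have key : ∀ t : ℝ, 0 ≤ t * a + t ^ 2 / 2 * b := by
    intro t
    have hw := hsaddle (zstar + t • s)
    rw [expand t] at hw
    linarith
  -- a is nonnegative (indeed zero)
  have ha0 : 0 ≤ a := by
    by_contra hneg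
    push_neg at hneg
    rcases eq_or_lt_of_le hb0 with hbz | hbp
    · have h1 := key 1
      rw [← hbz] at h1
      linarith
    · have hkey := key (-a / b)
      have h5 : (-a / b) * a + (-a / b) ^ 2 / 2 * b = -(a ^ 2) / (2 * b) := by
        field_simp; ring
      rw [h5] at hkey
      have h2b : (0 : ℝ) < 2 * b := by linarith
      have h7 : 0 * (2 * b) ≤ -(a ^ 2) := (le_div_iff₀ h2b).mp hkey
      nlinarith
  -- bound the dual term
  have hdual : ystar ⬝ᵥ (D.mulVec z - d) ≤ (∑ i, |ystar i|) * εg := by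
    rw [Finset.sum_mul]
    apply Finset.sum_le_sum
    intro i _
    have h1 : (D.mulVec z - d) i ≤ max ((D.mulVec z - d) i) 0 := le_max_left _ _
    calc ystar i * (D.mulVec z - d) i ≤ ystar i * εg :=
          mul_le_mul_of_nonneg_left (le_trans h1 (hinfeas i)) (hystar_nonneg i)
      _ ≤ |ystar i| * εg := mul_le_mul_of_nonneg_right (le_abs_self _) hεg
  -- value at t = 1
  have hz1 : zstar + (1 : ℝ) • s = z := by rw [hs]; funext i; simp
  have hval : V z + ystar ⬝ᵥ (D.mulVec z - d) = V zstar + a + b / 2 := by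
    have := expand 1
    rw [hz1] at this
    linarith [this]
  -- combine
  have hmain : μ * (s ⬝ᵥ s) ≤ 2 * (εV + (∑ i, |ystar i|) * εg) := by
    have hb2 : b / 2 ≤ εV + (∑ i, |ystar i|) * εg := by linarith
    linarith
  have hfin : s ⬝ᵥ s ≤ 2 * (εV + (∑ i, |ystar i|) * εg) / μ := by
    rw [le_div_iff₀ hμ]
    linarith [mul_comm μ (s ⬝ᵥ s)]
  rw [← hs]
  exact Real.sqrt_le_sqrt hfin
end
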